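/- Let β > 2 and suppose P(|ξ| > u) ≤ u^{-β} (ln u)^{-1} for all u ≥ e, where ξ is centered with i.i.d. copies ξ_i and S_n = n^{-1/2} Σ ξ_i. Then there exists C = C(β) with sup_n P(|S_n| > u) ≤ C · u^{-β} · ln ln u for all u ≥ e^e. -/

import Mathlib

open MeasureTheory Real ProbabilityTheory Set

lemma aux_exp {s L : ℝ} (hsL : s ≤ L) (hL : 0 ≤ L) :
    Real.exp s ≤ 1 + s + s ^ 2 * Real.exp L := by
  rcases le_or_gt (-1) s with h | h
  · have h1 : Real.exp s * (1 - s) ≤ 1 := by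
      have h2 : 1 - s ≤ Real.exp (-s) := by linarith [Real.add_one_le_exp (-s)]
      calc Real.exp s * (1 - s) ≤ Real.exp s * Real.exp (-s) :=
            mul_le_mul_of_nonneg_left h2 (Real.exp_pos s).le
        _ = 1 := by rw [← Real.exp_add]; simp
    have h3 : Real.exp s ≤ 1 + s + s ^ 2 * Real.exp s := by nlinarith [Real.exp_pos s]
    have h4 : s ^ 2 * Real.exp s ≤ s ^ 2 * Real.exp L :=
      mul_le_mul_of_nonneg_left (Real.exp_le_exp.2 hsL) (sq_nonneg s)
    linarith
  · have h1 : Real.exp s ≤ 1 := Real.exp_le_one_iff.2 (by linarith)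
    have h2 : (1:ℝ) ≤ Real.exp L := Real.one_le_exp hL
    nlinarith [sq_nonneg s]

lemma aux_sq_int {Ω : Type*} [MeasurableSpace Ω] (μ : Measure Ω) [IsProbabilityMeasure μ]
    (β : ℝ) (hβ : 2 < β) (g : Ω → ℝ) (hg : Measurable g)
    (htail : ∀ u : ℝ, Real.exp 1 ≤ u →
      (μ {ω | u < |g ω|}).toReal ≤ u ^ (-β) * (Real.log u)⁻¹) :
    Integrable (fun ω => (g ω) ^ 2) μ := by
  have hmble : Measurable (fun ω => (g ω) ^ 2) := hg.pow_const 2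
  refine ⟨hmble.aestronglyMeasurable, ?_⟩
  rw [hasFiniteIntegral_iff_norm]
  have hnorm : ∀ ω, ENNReal.ofReal ‖(g ω) ^ 2‖ = ENNReal.ofReal ((g ω) ^ 2) := by
    intro ω; rw [Real.norm_eq_abs, abs_of_nonneg (sq_nonneg _)]
  simp_rw [hnorm]
  rw [lintegral_eq_lintegral_meas_lt μ (Filter.Eventually.of_forall fun ω => sq_nonneg _)
    hmble.aemeasurable]
  set E : ℝ := Real.exp 1 ^ 2 with hE
  have hE1 : (0:ℝ) < E := by positivity
  have hsplit : Ioi (0:ℝ) = Ioc 0 E ∪ Ioi E :=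
    (Set.Ioc_union_Ioi_eq_Ioi (by positivity)).symm
  rw [hsplit, lintegral_union measurableSet_Ioi Set.Ioc_disjoint_Ioi_same]
  have h1 : ∫⁻ t in Ioc (0:ℝ) E, μ {a | t < g a ^ 2} ≤ ENNReal.ofReal E := by
    calc ∫⁻ t in Ioc (0:ℝ) E, μ {a | t < g a ^ 2} ≤ ∫⁻ _ in Ioc (0:ℝ) E, 1 :=
          lintegral_mono fun t => prob_le_one
      _ = volume (Ioc (0:ℝ) E) := by rw [setLIntegral_one]
      _ = ENNReal.ofReal E := by rw [Real.volume_Ioc, sub_zero]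
  have h2 : ∫⁻ t in Ioi E, μ {a | t < g a ^ 2} ≤
      ∫⁻ t in Ioi E, ENNReal.ofReal (t ^ (-(β/2))) := by
    apply setLIntegral_mono (by fun_prop)
    intro t ht
    have htE : E < t := ht
    have ht0 : (0:ℝ) < t := hE1.trans htE
    have hst : Real.exp 1 < Real.sqrt t := by
      have := (Real.sqrt_lt_sqrt_iff (by positivity)).2 htE
      rwa [Real.sqrt_sq (Real.exp_pos 1).le] at this
    have hset : {a | t < g a ^ 2} = {a | Real.sqrt t < |g a|} := by
      ext a
      simp only [Set.mem_setOf_eq]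
      rw [← Real.sqrt_sq_eq_abs, Real.sqrt_lt_sqrt_iff ht0.le]
    rw [hset]
    have := htail (Real.sqrt t) hst.le
    calc μ {a | Real.sqrt t < |g a|}
        = ENNReal.ofReal (μ {a | Real.sqrt t < |g a|}).toReal :=
          (ENNReal.ofReal_toReal (measure_ne_top μ _)).symm
      _ ≤ ENNReal.ofReal (t ^ (-(β/2))) := by
          apply ENNReal.ofReal_le_ofReal
          have hlog : 1 ≤ Real.log (Real.sqrt t) := by
            rw [show (1:ℝ) = Real.log (Real.exp 1) by rw [Real.log_exp]]
            exact Real.log_le_log (Real.exp_pos 1) hst.le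
          have hrw : Real.sqrt t ^ (-β) = t ^ (-(β/2)) := by
            rw [Real.sqrt_eq_rpow, ← Real.rpow_mul ht0.le]
            ring_nf
          calc (μ {a | Real.sqrt t < |g a|}).toReal
              ≤ Real.sqrt t ^ (-β) * (Real.log (Real.sqrt t))⁻¹ := this
            _ ≤ Real.sqrt t ^ (-β) * 1 := by
                apply mul_le_mul_of_nonneg_left _ (Real.rpow_nonneg (Real.sqrt_nonneg t) _)
                exact inv_le_one_of_one_le₀ hlog
            _ = t ^ (-(β/2)) := by rw [mul_one, hrw]
  have h3 : ∫⁻ t in Ioi E, ENNReal.ofReal (t ^ (-(β/2))) < ⊤ := by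
    have hint : IntegrableOn (fun t : ℝ => t ^ (-(β/2))) (Ioi E) :=
      integrableOn_Ioi_rpow_of_lt (by linarith) hE1
    have := hint.2
    rw [hasFiniteIntegral_iff_norm] at this
    refine lt_of_le_of_lt (lintegral_mono fun t => ?_) this
    exact ENNReal.ofReal_le_ofReal (le_abs_self _)
  calc (∫⁻ t in Ioc (0:ℝ) E, μ {a | t < g a ^ 2}) + ∫⁻ t in Ioi E, μ {a | t < g a ^ 2}
      ≤ ENNReal.ofReal E + ∫⁻ t in Ioi E, ENNReal.ofReal (t ^ (-(β/2))) := add_le_add h1 h2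
    _ < ⊤ := ENNReal.add_lt_top.2 ⟨ENNReal.ofReal_lt_top, h3⟩

set_option maxHeartbeats 1000000 in
theorem stmt_17 {Ω : Type*} [MeasurableSpace Ω] (μ : Measure Ω) [IsProbabilityMeasure μ]
    (β : ℝ) (hβ : 2 < β)
    (ξ : ℕ → Ω → ℝ) (hmeas : ∀ i, Measurable (ξ i))
    (hindep : iIndepFun ξ μ)
    (hident : ∀ i, IdentDistrib (ξ i) (ξ 0) μ μ)
    (hint : Integrable (ξ 0) μ) (hcent : ∫ ω, ξ 0 ω ∂μ = 0)
    (htail : ∀ u : ℝ, Real.exp 1 ≤ u →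
      (μ {ω | u < |ξ 0 ω|}).toReal ≤ u ^ (-β) * (Real.log u)⁻¹) :
    ∃ C > (0 : ℝ), ∀ n : ℕ, ∀ u : ℝ, Real.exp (Real.exp 1) ≤ u →
      (μ {ω | u < |(Real.sqrt n)⁻¹ * ∑ i ∈ Finset.range n, ξ i ω|}).toReal
        ≤ C * u ^ (-β) * Real.log (Real.log u) := by
  have hβ0 : (0:ℝ) < β := by linarith
  have hsqint : Integrable (fun ω => (ξ 0 ω) ^ 2) μ := aux_sq_int μ β hβ (ξ 0) (hmeas 0) htail
  obtain ⟨σ2, hσ2def⟩ : ∃ s : ℝ, s = ∫ ω, (ξ 0 ω) ^ 2 ∂μ := ⟨_, rfl⟩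
  have hσ2 : 0 ≤ σ2 := hσ2def ▸ integral_nonneg fun ω => sq_nonneg _
  obtain ⟨u₀, hu₀def⟩ : ∃ v : ℝ, v = Real.exp (Real.exp 1) + 20*β*Real.exp 1
      + 20*β*Real.sqrt σ2 + 160*β*σ2 + 1 := ⟨_, rfl⟩
  have hprod1 : (0:ℝ) ≤ β*Real.exp 1 := mul_nonneg hβ0.le (Real.exp_pos 1).le
  have hprod2 : (0:ℝ) ≤ β*Real.sqrt σ2 := mul_nonneg hβ0.le (Real.sqrt_nonneg σ2)
  have hprod3 : (0:ℝ) ≤ β*σ2 := mul_nonneg hβ0.le hσ2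
  have hu₀pos : 0 < u₀ := by
    rw [hu₀def]
    have h := Real.exp_pos (Real.exp 1)
    linarith only [h, hprod1, hprod2, hprod3]
  have hC1 : (0:ℝ) ≤ u₀ ^ β := Real.rpow_nonneg hu₀pos.le β
  have hC2 : (0:ℝ) ≤ (20*β) ^ β := Real.rpow_nonneg (by linarith) β
  refine ⟨u₀ ^ β + (20*β) ^ β + 2, by linarith only [hC1, hC2], fun n u hu => ?_⟩
  have hu0 : (0:ℝ) < u := lt_of_lt_of_le (Real.exp_pos _) hu
  have hu1 : (1:ℝ) ≤ u := le_trans (Real.one_le_exp (Real.exp_pos 1).le) hu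
  have hlogu : Real.exp 1 ≤ Real.log u := by
    rw [← Real.log_exp (Real.exp 1)]; exact Real.log_le_log (Real.exp_pos _) hu
  have hlogu1 : 1 ≤ Real.log u := le_trans (Real.one_le_exp zero_le_one) hlogu
  have hloglog : 1 ≤ Real.log (Real.log u) := by
    rw [show (1:ℝ) = Real.log (Real.exp 1) by rw [Real.log_exp]]
    exact Real.log_le_log (Real.exp_pos 1) hlogu
  have hub : (0:ℝ) < u ^ (-β) := Real.rpow_pos_of_pos hu0 _
  rcases Nat.eq_zero_or_pos n with rfl | hn
  · have hempty : {ω | u < |(Real.sqrt (0:ℕ))⁻¹ * ∑ i ∈ Finset.range 0, ξ i ω|} = ∅ := by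
      ext ω
      simp only [Finset.range_zero, Finset.sum_empty, mul_zero, abs_zero, Set.mem_setOf_eq,
        Set.mem_empty_iff_false, iff_false, not_lt]
      exact hu0.le
    rw [hempty, measure_empty]
    simp only [ENNReal.toReal_zero]
    exact mul_nonneg (mul_nonneg (by linarith only [hC1, hC2]) hub.le)
      (by linarith only [hloglog])
  -- main case : 1 ≤ n
  have hn0 : (0:ℝ) < (n:ℝ) := by exact_mod_cast hn
  have hn1 : (1:ℝ) ≤ (n:ℝ) := by exact_mod_cast hn
  obtain ⟨sn, hsndef⟩ : ∃ r : ℝ, r = Real.sqrt n := ⟨_, rfl⟩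
  rw [show Real.sqrt (n:ℝ) = sn from hsndef.symm]
  have hsn0 : 0 < sn := hsndef ▸ Real.sqrt_pos.2 hn0
  have hsn1 : 1 ≤ sn := by
    rw [hsndef, show (1:ℝ) = Real.sqrt 1 by simp]
    exact Real.sqrt_le_sqrt hn1
  have hsn2 : sn ^ 2 = (n:ℝ) := hsndef ▸ Real.sq_sqrt (Nat.cast_nonneg n)
  rcases lt_or_ge u u₀ with hcase | hcase
  · -- small u : trivial bound
    have h1 : (μ {ω | u < |sn⁻¹ * ∑ i ∈ Finset.range n, ξ i ω|}).toReal ≤ 1 := by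
      have h := ENNReal.toReal_mono (measure_ne_top μ Set.univ)
        (measure_mono (Set.subset_univ {ω | u < |sn⁻¹ * ∑ i ∈ Finset.range n, ξ i ω|}))
      simpa using h
    have h3 : u ^ β ≤ u₀ ^ β := Real.rpow_le_rpow hu0.le hcase.le hβ0.le
    have h4 : u ^ β * u ^ (-β) = 1 := by
      rw [← Real.rpow_add hu0]; simp
    have h2 : (1:ℝ) ≤ u₀ ^ β * u ^ (-β) := by nlinarith only [h3, h4, hub]
    have h7 : u₀ ^ β * u ^ (-β) ≤ (u₀ ^ β + (20*β) ^ β + 2) * u ^ (-β) := by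
      nlinarith only [hub, hC2]
    have hAx : (0:ℝ) ≤ (u₀ ^ β + (20*β) ^ β + 2) * u ^ (-β) :=
      mul_nonneg (by linarith only [hC1, hC2]) hub.le
    have h8 : (u₀ ^ β + (20*β) ^ β + 2) * u ^ (-β)
        ≤ (u₀ ^ β + (20*β) ^ β + 2) * u ^ (-β) * Real.log (Real.log u) := by
      nlinarith only [hAx, hloglog]
    linarith only [h1, h2, h7, h8]
  · -- large u : u₀ ≤ u
    have hu160 : 160*β*σ2 ≤ u := by
      have h0 : 160*β*σ2 ≤ u₀ := by
        rw [hu₀def]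
        have h := Real.exp_pos (Real.exp 1)
        linarith only [h, hprod1, hprod2]
      linarith only [h0, hcase]
    have husn : u₀ ≤ u * sn := by
      have h1 : u * 1 ≤ u * sn := mul_le_mul_of_nonneg_left hsn1 hu0.le
      linarith only [h1, hcase]
    obtain ⟨y, hydef⟩ : ∃ r : ℝ, r = u * sn / (20*β) := ⟨_, rfl⟩
    have hy0 : 0 < y := by
      rw [hydef]
      exact div_pos (mul_pos hu0 hsn0) (by linarith only [hβ0])
    have hye : Real.exp 1 ≤ y := by
      have h1 : 20*β*Real.exp 1 ≤ u₀ := by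
        rw [hu₀def]
        have h := Real.exp_pos (Real.exp 1)
        linarith only [h, hprod2, hprod3]
      rw [hydef, le_div_iff₀ (by linarith only [hβ0] : (0:ℝ) < 20*β)]
      linarith only [h1, husn]
    have hlogy : 1 ≤ Real.log y := by
      rw [show (1:ℝ) = Real.log (Real.exp 1) from (Real.log_exp 1).symm]
      exact Real.log_le_log (Real.exp_pos 1) hye
    have hysig : Real.sqrt σ2 ≤ y := by
      have h1 : 20*β*Real.sqrt σ2 ≤ u₀ := by
        rw [hu₀def]
        have h := Real.exp_pos (Real.exp 1)
        linarith only [h, hprod1, hprod3]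
      rw [hydef, le_div_iff₀ (by linarith only [hβ0] : (0:ℝ) < 20*β)]
      linarith only [h1, husn]
    -- truncation function
    obtain ⟨f, hfdef⟩ : ∃ F : ℝ → ℝ, F = fun x => if |x| ≤ y then x else 0 := ⟨_, rfl⟩
    have hfmeas : Measurable f := by
      rw [hfdef]
      exact Measurable.ite (measurableSet_le measurable_abs measurable_const)
        measurable_id measurable_const
    have hfbd : ∀ x, |f x| ≤ y := by
      intro x
      by_cases h : |x| ≤ y
      · simpa [hfdef, h] using h
      · simp [hfdef, h, hy0.le]
    have hfsq : ∀ x, (f x) ^ 2 ≤ x ^ 2 := by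
      intro x
      by_cases h : |x| ≤ y
      · simp [hfdef, h]
      · simp only [hfdef, if_neg h]
        nlinarith only [sq_nonneg x]
    have hfdiff : ∀ x, |f x - x| ≤ x ^ 2 / y := by
      intro x
      by_cases h : |x| ≤ y
      · simp only [hfdef, if_pos h, sub_self, abs_zero]
        exact div_nonneg (sq_nonneg x) hy0.le
      · push_neg at h
        simp only [hfdef, if_neg (not_le.2 h), zero_sub, abs_neg]
        rw [le_div_iff₀ hy0]
        nlinarith only [abs_nonneg x, sq_abs x, h, hy0]
    have hY0int : Integrable (fun ω => f (ξ 0 ω)) μ := by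
      refine Integrable.mono' (integrable_const y)
        ((hfmeas.comp (hmeas 0)).aestronglyMeasurable) ?_
      exact Filter.Eventually.of_forall fun ω => by
        rw [Real.norm_eq_abs]; exact hfbd _
    obtain ⟨m, hmdef⟩ : ∃ r : ℝ, r = ∫ ω, f (ξ 0 ω) ∂μ := ⟨_, rfl⟩
    have hmbd : |m| ≤ σ2 / y := by
      have h1 : m = ∫ ω, (f (ξ 0 ω) - ξ 0 ω) ∂μ := by
        rw [integral_sub hY0int hint, hcent, sub_zero, hmdef]
      rw [h1]
      have h2 : |∫ ω, (f (ξ 0 ω) - ξ 0 ω) ∂μ| ≤ ∫ ω, |f (ξ 0 ω) - ξ 0 ω| ∂μ := by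
        simpa [Real.norm_eq_abs] using
          norm_integral_le_integral_norm (fun ω => f (ξ 0 ω) - ξ 0 ω) (μ := μ)
      refine h2.trans ?_
      have h3 : ∫ ω, |f (ξ 0 ω) - ξ 0 ω| ∂μ ≤ ∫ ω, (ξ 0 ω) ^ 2 / y ∂μ :=
        integral_mono (hY0int.sub hint).abs (hsqint.div_const y) (fun ω => hfdiff _)
      refine h3.trans ?_
      rw [integral_div, hσ2def]
    have hσ2sqrt : σ2 = Real.sqrt σ2 * Real.sqrt σ2 := (Real.mul_self_sqrt hσ2).symm
    have hm_y : |m| ≤ y := by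
      refine hmbd.trans ?_
      rw [div_le_iff₀ hy0]
      nlinarith only [Real.sqrt_nonneg σ2, hysig, hσ2sqrt]
    have hmsq : m ^ 2 ≤ σ2 := by
      have h1 : |m| ≤ Real.sqrt σ2 := by
        refine hmbd.trans ?_
        rcases eq_or_lt_of_le hσ2 with h | h
        · rw [← h]; simp [Real.sqrt_zero]
        · rw [div_le_iff₀ hy0]
          nlinarith only [Real.sqrt_nonneg σ2, hysig, hσ2sqrt]
      nlinarith only [h1, abs_nonneg m, sq_abs m, Real.sqrt_nonneg σ2, hσ2sqrt]
    obtain ⟨g, hgdef⟩ : ∃ G : ℝ → ℝ, G = fun x => f x - m := ⟨_, rfl⟩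
    have hgmeas : Measurable g := by rw [hgdef]; exact hfmeas.sub measurable_const
    obtain ⟨b, hbdef⟩ : ∃ r : ℝ, r = 2*y := ⟨_, rfl⟩
    have hb0 : 0 < b := by rw [hbdef]; linarith only [hy0]
    have hgbd : ∀ x, |g x| ≤ b := by
      intro x
      rw [hgdef, hbdef]
      simp only []
      rw [sub_eq_add_neg]
      refine (abs_add_le _ _).trans ?_
      rw [abs_neg]
      linarith only [hfbd x, hm_y]
    have hZmeas : ∀ i, Measurable (g ∘ ξ i) := fun i => hgmeas.comp (hmeas i)
    have hlogu0 : (0:ℝ) < Real.log u := by linarith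
    obtain ⟨lam, hlamdef⟩ : ∃ r : ℝ, r = 5*β*Real.log u/(u*sn) := ⟨_, rfl⟩
    have hlam0 : 0 < lam := by
      rw [hlamdef]
      exact div_pos (by nlinarith only [hβ0, hlogu0]) (mul_pos hu0 hsn0)
    obtain ⟨tt, httdef⟩ : ∃ r : ℝ, r = u*sn/2 := ⟨_, rfl⟩
    have hune : u ≠ 0 := hu0.ne'
    have hsne : sn ≠ 0 := hsn0.ne'
    have hβne : β ≠ 0 := hβ0.ne'
    have hnne : (n:ℝ) ≠ 0 := hn0.ne'
    have hlamb : lam * b = Real.log u / 2 := by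
      rw [hlamdef, hbdef, hydef]
      field_simp
      ring
    -- mgf bound for centered bounded variables
    have hmgf : ∀ W : Ω → ℝ, Measurable W → (∀ ω, |W ω| ≤ b) → (∫ ω, W ω ∂μ) = 0 →
        (∫ ω, (W ω) ^ 2 ∂μ) ≤ 4*σ2 →
        mgf W μ lam ≤ Real.exp (lam ^ 2 * (4*σ2) * Real.exp (lam*b)) := by
      intro W hWm hWb hWmean hWsq
      have hWint : Integrable W μ :=
        Integrable.mono' (integrable_const b) hWm.aestronglyMeasurable
          (Filter.Eventually.of_forall fun ω => by rw [Real.norm_eq_abs]; exact hWb ω)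
      have hWsqint : Integrable (fun ω => (W ω) ^ 2) μ :=
        Integrable.mono' (integrable_const (b ^ 2)) ((hWm.pow_const 2).aestronglyMeasurable)
          (Filter.Eventually.of_forall fun ω => by
            rw [Real.norm_eq_abs, abs_of_nonneg (sq_nonneg _)]
            nlinarith only [hWb ω, abs_nonneg (W ω), sq_abs (W ω), hb0])
      have hexpint : Integrable (fun ω => Real.exp (lam * W ω)) μ := by
        refine Integrable.mono' (integrable_const (Real.exp (lam*b)))
          ((Real.measurable_exp.comp (hWm.const_mul lam)).aestronglyMeasurable) ?_
        refine Filter.Eventually.of_forall fun ω => ?_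
        rw [Real.norm_eq_abs, abs_of_nonneg (Real.exp_pos _).le]
        exact Real.exp_le_exp.2 (mul_le_mul_of_nonneg_left (abs_le.1 (hWb ω)).2 hlam0.le)
      have hpt : ∀ ω, Real.exp (lam * W ω)
          ≤ 1 + lam * W ω + (lam ^ 2 * Real.exp (lam*b)) * (W ω) ^ 2 := by
        intro ω
        have h1 := aux_exp (s := lam * W ω) (L := lam * b)
          (mul_le_mul_of_nonneg_left (abs_le.1 (hWb ω)).2 hlam0.le)
          (mul_nonneg hlam0.le hb0.le)
        have h2 : (lam * W ω) ^ 2 * Real.exp (lam*b)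
            = (lam ^ 2 * Real.exp (lam*b)) * (W ω) ^ 2 := by ring
        linarith only [h1, h2]
      have hRHSint : Integrable
          (fun ω => 1 + lam * W ω + (lam ^ 2 * Real.exp (lam*b)) * (W ω) ^ 2) μ :=
        ((integrable_const 1).add (hWint.const_mul lam)).add (hWsqint.const_mul _)
      have hstep : mgf W μ lam ≤ 1 + lam ^ 2 * Real.exp (lam*b) * (4*σ2) := by
        have hc1 : mgf W μ lam = ∫ ω, Real.exp (lam * W ω) ∂μ := rfl
        have hc2 : ∫ ω, Real.exp (lam * W ω) ∂μ
            ≤ ∫ ω, (1 + lam * W ω + (lam ^ 2 * Real.exp (lam*b)) * (W ω) ^ 2) ∂μ :=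
          integral_mono hexpint hRHSint hpt
        have i1 : Integrable (fun ω => 1 + lam * W ω) μ :=
          (integrable_const 1).add (hWint.const_mul lam)
        have i2 : Integrable (fun ω => (lam ^ 2 * Real.exp (lam*b)) * (W ω) ^ 2) μ :=
          hWsqint.const_mul _
        have hc3 : ∫ ω, (1 + lam * W ω + (lam ^ 2 * Real.exp (lam*b)) * (W ω) ^ 2) ∂μ
            = 1 + lam * (∫ ω, W ω ∂μ)
              + (lam ^ 2 * Real.exp (lam*b)) * ∫ ω, (W ω) ^ 2 ∂μ := by
          rw [integral_add i1 i2, integral_add (integrable_const 1) (hWint.const_mul lam),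
            integral_const, integral_const_mul, integral_const_mul]
          simp
        have hc4 : (lam ^ 2 * Real.exp (lam*b)) * (∫ ω, (W ω) ^ 2 ∂μ)
            ≤ (lam ^ 2 * Real.exp (lam*b)) * (4*σ2) :=
          mul_le_mul_of_nonneg_left hWsq (by positivity)
        rw [hc1]
        rw [hWmean, mul_zero, add_zero] at hc3
        linarith only [hc2, hc3, hc4]
      refine hstep.trans ?_
      have h3 := Real.add_one_le_exp (lam ^ 2 * (4*σ2) * Real.exp (lam*b))
      have h4 : lam ^ 2 * Real.exp (lam*b) * (4*σ2)
          = lam ^ 2 * (4*σ2) * Real.exp (lam*b) := by ring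
      linarith only [h3, h4]
    -- properties of Z := g ∘ ξ
    have hZ0int : Integrable (g ∘ ξ 0) μ :=
      Integrable.mono' (integrable_const b) (hZmeas 0).aestronglyMeasurable
        (Filter.Eventually.of_forall fun ω => by rw [Real.norm_eq_abs]; exact hgbd _)
    have hZ0mean : ∫ ω, (g ∘ ξ 0) ω ∂μ = 0 := by
      have h0 : (fun ω => (g ∘ ξ 0) ω) = fun ω => f (ξ 0 ω) - m := by
        funext ω; rw [Function.comp_apply, hgdef]
      rw [h0, integral_sub hY0int (integrable_const m), integral_const]
      simp [hmdef]
    have hZ0sqint : Integrable (fun ω => ((g ∘ ξ 0) ω) ^ 2) μ :=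
      Integrable.mono' (integrable_const (b ^ 2))
        (((hZmeas 0).pow_const 2).aestronglyMeasurable)
        (Filter.Eventually.of_forall fun ω => by
          rw [Real.norm_eq_abs, abs_of_nonneg (sq_nonneg _)]
          simp only [Function.comp_apply]
          nlinarith only [hgbd (ξ 0 ω), abs_nonneg (g (ξ 0 ω)), sq_abs (g (ξ 0 ω)), hb0])
    have hZ0sq : ∫ ω, ((g ∘ ξ 0) ω) ^ 2 ∂μ ≤ 4*σ2 := by
      have hptw : ∀ ω, ((g ∘ ξ 0) ω) ^ 2 ≤ 2*(ξ 0 ω) ^ 2 + 2*σ2 := by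
        intro ω
        have h1 := hfsq (ξ 0 ω)
        have h2 : ((g ∘ ξ 0) ω) ^ 2 = (f (ξ 0 ω) - m) ^ 2 := by
          rw [Function.comp_apply, hgdef]
        rw [h2]
        nlinarith only [sq_nonneg (f (ξ 0 ω) + m), hmsq, h1]
      have hc1 : ∫ ω, ((g ∘ ξ 0) ω) ^ 2 ∂μ ≤ ∫ ω, (2*(ξ 0 ω) ^ 2 + 2*σ2) ∂μ :=
        integral_mono hZ0sqint ((hsqint.const_mul 2).add (integrable_const _)) hptw
      have hc2 : ∫ ω, (2*(ξ 0 ω) ^ 2 + 2*σ2) ∂μ = 2*σ2 + 2*σ2 := by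
        rw [integral_add (hsqint.const_mul 2) (integrable_const _), integral_const_mul,
          integral_const, ← hσ2def]
        simp
      linarith only [hc1, hc2]
    -- Chernoff bound, abstract in the family
    have hchern : ∀ Zs : ℕ → Ω → ℝ, iIndepFun Zs μ →
        (∀ i, Measurable (Zs i)) → (∀ i ω, |Zs i ω| ≤ b) →
        (∀ i, IdentDistrib (Zs i) (Zs 0) μ μ) →
        mgf (Zs 0) μ lam ≤ Real.exp (lam ^ 2 * (4*σ2) * Real.exp (lam*b)) →
        (μ {ω | tt ≤ (∑ i ∈ Finset.range n, Zs i) ω}).toReal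
          ≤ Real.exp ((n:ℝ) * (lam ^ 2 * (4*σ2) * Real.exp (lam*b)) - lam * tt) := by
      intro Zs hZsind hZsmeas hZsbd hZsident hZsmgf
      have hsummeas : Measurable (∑ i ∈ Finset.range n, Zs i) := by
        rw [show (∑ i ∈ Finset.range n, Zs i) = (fun ω => ∑ i ∈ Finset.range n, Zs i ω) by
          funext ω; simp [Finset.sum_apply]]
        exact Finset.measurable_sum _ fun i _ => hZsmeas i
      have hintexp : Integrable
          (fun ω => Real.exp (lam * (∑ i ∈ Finset.range n, Zs i) ω)) μ := by
        refine Integrable.mono' (integrable_const (Real.exp (lam * ((n:ℝ)*b))))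
          ((Real.measurable_exp.comp (hsummeas.const_mul lam)).aestronglyMeasurable) ?_
        refine Filter.Eventually.of_forall fun ω => ?_
        rw [Real.norm_eq_abs, abs_of_nonneg (Real.exp_pos _).le]
        apply Real.exp_le_exp.2
        apply mul_le_mul_of_nonneg_left _ hlam0.le
        have h1 : (∑ i ∈ Finset.range n, Zs i) ω = ∑ i ∈ Finset.range n, Zs i ω := by
          simp [Finset.sum_apply]
        rw [h1]
        have h2 : (∑ i ∈ Finset.range n, Zs i ω) ≤ ∑ _i ∈ Finset.range n, b :=
          Finset.sum_le_sum fun i _ => (abs_le.1 (hZsbd i ω)).2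
        refine h2.trans ?_
        rw [Finset.sum_const, Finset.card_range]
        simp [nsmul_eq_mul]
      have h1 := measure_ge_le_exp_mul_mgf (μ := μ) (X := ∑ i ∈ Finset.range n, Zs i)
        tt hlam0.le hintexp
      have h2 : mgf (∑ i ∈ Finset.range n, Zs i) μ lam
          = ∏ i ∈ Finset.range n, mgf (Zs i) μ lam :=
        hZsind.mgf_sum hZsmeas (Finset.range n)
      have h3 : ∀ i, mgf (Zs i) μ lam = mgf (Zs 0) μ lam := by
        intro i
        have hexpm : Measurable (fun x : ℝ => Real.exp (lam * x)) := by fun_prop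
        exact ((hZsident i).comp hexpm).integral_eq
      have h4 : mgf (∑ i ∈ Finset.range n, Zs i) μ lam
          ≤ (Real.exp (lam ^ 2 * (4*σ2) * Real.exp (lam*b))) ^ n := by
        rw [h2]
        have h5 : (∏ i ∈ Finset.range n, mgf (Zs i) μ lam)
            ≤ ∏ _i ∈ Finset.range n, Real.exp (lam ^ 2 * (4*σ2) * Real.exp (lam*b)) := by
          apply Finset.prod_le_prod
          · exact fun i _ => mgf_nonneg
          · intro i _
            rw [h3 i]
            exact hZsmgf
        refine h5.trans_eq ?_
        rw [Finset.prod_const, Finset.card_range]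
      have h6 : (μ {ω | tt ≤ (∑ i ∈ Finset.range n, Zs i) ω}).toReal
          ≤ Real.exp (-lam * tt)
            * (Real.exp (lam ^ 2 * (4*σ2) * Real.exp (lam*b))) ^ n := by
        refine h1.trans ?_
        exact mul_le_mul_of_nonneg_left h4 (Real.exp_pos _).le
      refine h6.trans_eq ?_
      rw [← Real.exp_nat_mul, ← Real.exp_add]
      ring_nf
    -- exponent estimate
    have hexpbound : (n:ℝ) * (lam ^ 2 * (4*σ2) * Real.exp (lam*b)) - lam * tt
        ≤ -(β * Real.log u) := by
      have hlamtt : lam * tt = 5*β*Real.log u/2 := by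
        rw [hlamdef, httdef]
        field_simp
        all_goals ring
      have hexph : Real.exp (lam*b) = Real.sqrt u := by
        rw [hlamb, Real.sqrt_eq_rpow, Real.rpow_def_of_pos hu0]
        congr 1
        ring
      have hnlam : (n:ℝ) * lam ^ 2 = 25*β^2*(Real.log u)^2/u^2 := by
        have hub2 : (u*sn)^2 = u^2*(n:ℝ) := by rw [mul_pow, hsn2]
        rw [hlamdef, div_pow, hub2]
        field_simp
        ring
      have hsu : Real.sqrt u * Real.sqrt u = u := Real.mul_self_sqrt hu0.le
      have hL2su : Real.log u ≤ 2*Real.sqrt u := by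
        have h1 : Real.log (Real.sqrt u) ≤ Real.sqrt u - 1 :=
          Real.log_le_sub_one_of_pos (Real.sqrt_pos.2 hu0)
        have h2 : Real.log (Real.sqrt u) = Real.log u/2 := Real.log_sqrt hu0.le
        linarith
      have hkey : 25*β^2*(Real.log u)^2/u^2 * (4*σ2) * Real.sqrt u ≤ 3*β*Real.log u/2 := by
        rw [div_mul_eq_mul_div, div_mul_eq_mul_div,
          div_le_div_iff₀ (pow_pos hu0 2) (by norm_num)]
        have k1 : (Real.log u)^2*Real.sqrt u ≤ 2*Real.log u*u := by
          nlinarith only [hL2su, hlogu1, Real.sqrt_nonneg u, hsu,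
            mul_nonneg (by linarith only [hlogu1] : (0:ℝ) ≤ Real.log u) (Real.sqrt_nonneg u)]
        nlinarith only [k1,
          mul_le_mul_of_nonneg_left k1
            (mul_nonneg (by positivity : (0:ℝ) ≤ 100*β^2) hσ2),
          mul_le_mul_of_nonneg_right hu160
            (mul_nonneg (mul_nonneg hβ0.le hlogu0.le) hu0.le),
          mul_nonneg (mul_nonneg hβ0.le hlogu0.le) (sq_nonneg u)]
      have harr : (n:ℝ) * (lam ^ 2 * (4*σ2) * Real.exp (lam*b))
          = 25*β^2*(Real.log u)^2/u^2 * (4*σ2) * Real.sqrt u := by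
        rw [hexph, show (n:ℝ) * (lam ^ 2 * (4*σ2) * Real.sqrt u)
          = ((n:ℝ) * lam^2) * (4*σ2) * Real.sqrt u by ring, hnlam]
      rw [harr, hlamtt]
      linarith
    have hPexp : Real.exp ((n:ℝ) * (lam ^ 2 * (4*σ2) * Real.exp (lam*b)) - lam * tt)
        ≤ u ^ (-β) := by
      refine (Real.exp_le_exp.2 hexpbound).trans_eq ?_
      rw [Real.rpow_def_of_pos hu0]
      congr 1
      ring
    -- the two Chernoff events
    obtain ⟨Zp, hZpdef⟩ : ∃ Zs : ℕ → Ω → ℝ, Zs = fun i => g ∘ ξ i := ⟨_, rfl⟩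
    obtain ⟨Zm, hZmdef⟩ : ∃ Zs : ℕ → Ω → ℝ, Zs = fun i ω => -(g (ξ i ω)) := ⟨_, rfl⟩
    have hP1 : (μ {ω | tt ≤ (∑ i ∈ Finset.range n, Zp i) ω}).toReal ≤ u ^ (-β) := by
      refine (hchern Zp ?_ ?_ ?_ ?_ ?_).trans hPexp
      · rw [hZpdef]; exact hindep.comp (fun _ => g) (fun _ => hgmeas)
      · rw [hZpdef]; exact hZmeas
      · rw [hZpdef]; exact fun i ω => hgbd _
      · rw [hZpdef]; exact fun i => (hident i).comp hgmeas
      · rw [hZpdef]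
        exact hmgf (g ∘ ξ 0) (hZmeas 0) (fun ω => hgbd _) hZ0mean hZ0sq
    have hP2 : (μ {ω | tt ≤ (∑ i ∈ Finset.range n, Zm i) ω}).toReal ≤ u ^ (-β) := by
      refine (hchern Zm ?_ ?_ ?_ ?_ ?_).trans hPexp
      · rw [hZmdef]
        exact hindep.comp (fun _ => fun x => -(g x)) (fun _ => hgmeas.neg)
      · rw [hZmdef]; exact fun i => (hZmeas i).neg
      · rw [hZmdef]
        intro i ω
        simp only [abs_neg]
        exact hgbd _
      · rw [hZmdef]; exact fun i => (hident i).comp hgmeas.neg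
      · rw [hZmdef]
        refine hmgf (fun ω => -(g (ξ 0 ω))) (hZmeas 0).neg
          (fun ω => by simpa [abs_neg] using hgbd (ξ 0 ω)) ?_ ?_
        · rw [integral_neg]
          simpa using hZ0mean
        · have h0 : (fun ω => (-(g (ξ 0 ω))) ^ 2) = fun ω => ((g ∘ ξ 0) ω) ^ 2 := by
            funext ω; simp [Function.comp_apply, neg_sq]
          rw [h0]
          exact hZ0sq
    -- tail of single variables
    have hA : (μ (⋃ i ∈ Finset.range n, {ω | y < |ξ i ω|})).toReal
        ≤ (20*β) ^ β * u ^ (-β) := by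
      have h1 : μ (⋃ i ∈ Finset.range n, {ω | y < |ξ i ω|})
          ≤ ∑ i ∈ Finset.range n, μ {ω | y < |ξ i ω|} :=
        measure_biUnion_finset_le _ _
      have h2 : ∀ i, μ {ω | y < |ξ i ω|} = μ {ω | y < |ξ 0 ω|} := by
        intro i
        have hs : MeasurableSet {x : ℝ | y < |x|} :=
          measurableSet_lt measurable_const measurable_abs
        exact (hident i).measure_mem_eq hs
      have h3 : (∑ i ∈ Finset.range n, μ {ω | y < |ξ i ω|})
          = (n : ENNReal) * μ {ω | y < |ξ 0 ω|} := by
        rw [Finset.sum_congr rfl (fun i _ => h2 i), Finset.sum_const, Finset.card_range,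
          nsmul_eq_mul]
      have h4 : (μ (⋃ i ∈ Finset.range n, {ω | y < |ξ i ω|})).toReal
          ≤ (n:ℝ) * (μ {ω | y < |ξ 0 ω|}).toReal := by
        have h5 := ENNReal.toReal_mono
          (ENNReal.mul_ne_top (ENNReal.natCast_ne_top n) (measure_ne_top μ _))
          (h1.trans_eq h3)
        rwa [ENNReal.toReal_mul, ENNReal.toReal_natCast] at h5
      refine h4.trans ?_
      have h6 : (μ {ω | y < |ξ 0 ω|}).toReal ≤ y ^ (-β) := by
        refine (htail y hye).trans ?_
        have h7 : (Real.log y)⁻¹ ≤ 1 := inv_le_one_of_one_le₀ hlogy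
        have h8 : (0:ℝ) ≤ y ^ (-β) := Real.rpow_nonneg hy0.le _
        nlinarith only [h7, h8]
      have h9 : (n:ℝ) * (μ {ω | y < |ξ 0 ω|}).toReal ≤ (n:ℝ) * y ^ (-β) :=
        mul_le_mul_of_nonneg_left h6 hn0.le
      refine h9.trans ?_
      have e1 : y ^ (-β) = (20*β) ^ β * (u*sn) ^ (-β) := by
        rw [hydef, Real.div_rpow (mul_nonneg hu0.le hsn0.le) (by linarith : (0:ℝ) ≤ 20*β),
          Real.rpow_neg (by linarith : (0:ℝ) ≤ 20*β), div_inv_eq_mul]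
        ring
      have e2 : (u*sn) ^ (-β) = u ^ (-β) * sn ^ (-β) := Real.mul_rpow hu0.le hsn0.le
      have e4 : sn ^ ((2:ℝ)) = (n:ℝ) := by
        rw [show ((2:ℝ)) = ((2:ℕ):ℝ) by norm_num, Real.rpow_natCast]
        exact_mod_cast hsn2
      have e3 : (n:ℝ) * sn ^ (-β) ≤ 1 := by
        rw [← e4, ← Real.rpow_add hsn0]
        exact Real.rpow_le_one_of_one_le_of_nonpos hsn1 (by linarith)
      have e5 : (n:ℝ) * y ^ (-β) = (20*β) ^ β * u ^ (-β) * ((n:ℝ) * sn ^ (-β)) := by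
        rw [e1, e2]; ring
      rw [e5]
      have e6 : (0:ℝ) ≤ (20*β) ^ β * u ^ (-β) := mul_nonneg hC2 hub.le
      nlinarith only [e3, e6]
    -- event inclusion
    have hsubset : {ω | u < |sn⁻¹ * ∑ i ∈ Finset.range n, ξ i ω|} ⊆
        (⋃ i ∈ Finset.range n, {ω | y < |ξ i ω|}) ∪
        ({ω | tt ≤ (∑ i ∈ Finset.range n, Zp i) ω} ∪
         {ω | tt ≤ (∑ i ∈ Finset.range n, Zm i) ω}) := by
      intro ω hω
      by_cases hAmem : ω ∈ ⋃ i ∈ Finset.range n, {ω | y < |ξ i ω|}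
      · exact Or.inl hAmem
      · refine Or.inr ?_
        have hforall : ∀ i ∈ Finset.range n, |ξ i ω| ≤ y := by
          intro i hi
          by_contra hcon
          push_neg at hcon
          exact hAmem (Set.mem_biUnion hi hcon)
        have hfx : ∀ i ∈ Finset.range n, f (ξ i ω) = ξ i ω := by
          intro i hi; rw [hfdef]; exact if_pos (hforall i hi)
        have hsumZ : (∑ i ∈ Finset.range n, g (ξ i ω))
            = (∑ i ∈ Finset.range n, ξ i ω) - (n:ℝ)*m := by
          have hg1 : ∀ i ∈ Finset.range n, g (ξ i ω) = f (ξ i ω) - m := by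
            intro i _; rw [hgdef]
          rw [Finset.sum_congr rfl hg1, Finset.sum_sub_distrib, Finset.sum_const,
            Finset.card_range, nsmul_eq_mul, Finset.sum_congr rfl hfx]
        have habs : u * sn < |∑ i ∈ Finset.range n, ξ i ω| := by
          have h1 : |sn⁻¹ * ∑ i ∈ Finset.range n, ξ i ω|
              = sn⁻¹ * |∑ i ∈ Finset.range n, ξ i ω| := by
            rw [abs_mul, abs_of_nonneg (inv_nonneg.2 hsn0.le)]
          have h2 : u < sn⁻¹ * |∑ i ∈ Finset.range n, ξ i ω| := by
            rw [← h1]; exact hω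
          calc u * sn < (sn⁻¹ * |∑ i ∈ Finset.range n, ξ i ω|) * sn :=
                mul_lt_mul_of_pos_right h2 hsn0
            _ = |∑ i ∈ Finset.range n, ξ i ω| := by
                field_simp
        have h40 : 40*β*σ2 ≤ u^2 := by nlinarith only [hu160, hu1, hprod3, hu0]
        have hnm : (n:ℝ)*|m| ≤ u*sn/2 := by
          have h1 : (n:ℝ)*|m| ≤ (n:ℝ)*(σ2/y) :=
            mul_le_mul_of_nonneg_left hmbd hn0.le
          refine h1.trans ?_
          have heq : (n:ℝ)*(σ2/y) = 20*β*σ2*(n:ℝ)/(u*sn) := by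
            rw [hydef]
            field_simp
          rw [heq, div_le_div_iff₀ (mul_pos hu0 hsn0) (by norm_num : (0:ℝ) < 2)]
          have h2 : (u*sn)*(u*sn) = u^2*(n:ℝ) := by
            rw [show (u*sn)*(u*sn) = u^2*sn^2 by ring, hsn2]
          nlinarith only [h2, h40, hn0]
        have h5 : tt < |∑ i ∈ Finset.range n, g (ξ i ω)| := by
          have h6 : |(n:ℝ)*m| = (n:ℝ)*|m| := by rw [abs_mul, abs_of_nonneg hn0.le]
          have h7 := abs_sub_abs_le_abs_sub (∑ i ∈ Finset.range n, ξ i ω) ((n:ℝ)*m)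
          rw [hsumZ, httdef]
          linarith only [habs, hnm, h6, h7]
        rcases le_abs.1 h5.le with h8 | h8
        · left
          show tt ≤ (∑ i ∈ Finset.range n, Zp i) ω
          rw [hZpdef]
          simpa [Finset.sum_apply] using h8
        · right
          show tt ≤ (∑ i ∈ Finset.range n, Zm i) ω
          rw [hZmdef]
          simp only [Finset.sum_apply]
          rw [show (∑ i ∈ Finset.range n, (fun (i : ℕ) (ω' : Ω) => -(g (ξ i ω'))) i ω)
            = -∑ i ∈ Finset.range n, g (ξ i ω) by rw [← Finset.sum_neg_distrib]]
          exact h8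
    -- combine
    have hmeasle : μ {ω | u < |sn⁻¹ * ∑ i ∈ Finset.range n, ξ i ω|}
        ≤ μ (⋃ i ∈ Finset.range n, {ω | y < |ξ i ω|})
          + (μ {ω | tt ≤ (∑ i ∈ Finset.range n, Zp i) ω}
            + μ {ω | tt ≤ (∑ i ∈ Finset.range n, Zm i) ω}) := by
      refine (measure_mono hsubset).trans ?_
      refine (measure_union_le _ _).trans ?_
      exact add_le_add le_rfl (measure_union_le _ _)
    have htr : (μ {ω | u < |sn⁻¹ * ∑ i ∈ Finset.range n, ξ i ω|}).toReal
        ≤ (μ (⋃ i ∈ Finset.range n, {ω | y < |ξ i ω|})).toReal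
          + ((μ {ω | tt ≤ (∑ i ∈ Finset.range n, Zp i) ω}).toReal
            + (μ {ω | tt ≤ (∑ i ∈ Finset.range n, Zm i) ω}).toReal) := by
      have h9 := ENNReal.toReal_mono
        (ENNReal.add_ne_top.2 ⟨measure_ne_top μ _,
          ENNReal.add_ne_top.2 ⟨measure_ne_top μ _, measure_ne_top μ _⟩⟩) hmeasle
      rwa [ENNReal.toReal_add (measure_ne_top μ _)
          (ENNReal.add_ne_top.2 ⟨measure_ne_top μ _, measure_ne_top μ _⟩),
        ENNReal.toReal_add (measure_ne_top μ _) (measure_ne_top μ _)] at h9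
    have hAx2 : (0:ℝ) ≤ (u₀ ^ β + (20*β) ^ β + 2) * u ^ (-β) :=
      mul_nonneg (by linarith only [hC1, hC2]) hub.le
    have hfinal : (20*β) ^ β * u ^ (-β) + (u ^ (-β) + u ^ (-β))
        ≤ (u₀ ^ β + (20*β) ^ β + 2) * u ^ (-β) * Real.log (Real.log u) := by
      nlinarith only [hub, hloglog, hC1, hC2, hAx2,
        mul_nonneg hC1 hub.le]
    linarith only [htr, hA, hP1, hP2, hfinal]
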